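/- arXiv:1810.13372 — 3 statements merged into one kernel-verified Lean document; each statement's English description precedes it below -/
import Mathlib

section
/- (Pólya's theorem, Proposition 3.2.) Let h ∈ ℝ[x₁,…,x_n] be homogeneous of degree d and suppose h(u) > 0 for every u in the simplex Δ_n. Then there exists N ∈ ℕ such that for every integer r ≥ N the polynomial (x₁+…+x_n)^r · h(x) has all positive coefficients; that is, for every multi-index κ ∈ ℕⁿ with |κ| = d + r, the coefficient of x^κ in (x₁+…+x_n)^r · h(x) is strictly positive. -/
open MvPolynomial Finset

theorem polya_aux_descFactorial (m k : ℕ) :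
    ((m.descFactorial k : ℝ)) = ∏ j ∈ Finset.range k, ((m : ℝ) - j) := by
  induction k with
  | zero => simp
  | succ k ih =>
    rw [Finset.prod_range_succ, ← ih, Nat.descFactorial_succ]
    rcases le_or_gt (k+1) m with hk | hk
    · push_cast [Nat.cast_sub (by omega : k ≤ m)]
      ring
    · rcases lt_or_eq_of_le (Nat.lt_succ_iff.1 hk) with hk' | hk'
      · rw [Nat.descFactorial_eq_zero_iff_lt.2 hk']
        simp
      · subst hk'; simp

theorem polya_aux_coeff_sum_pow (n r : ℕ) (β : Fin n →₀ ℕ) :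
    ((∑ j, (X j : MvPolynomial (Fin n) ℝ)) ^ r).coeff β =
      if (∑ i, β i) = r then (Nat.multinomial Finset.univ β : ℝ) else 0 := by
  rw [Finset.sum_pow_eq_sum_piAntidiag, MvPolynomial.coeff_sum]
  have key : ∀ k : Fin n → ℕ, (∏ i, (X i : MvPolynomial (Fin n) ℝ) ^ k i) =
      monomial (Finsupp.equivFunOnFinite.symm k) 1 := by
    intro k
    rw [← prod_X_pow_eq_monomial]
    refine (Finset.prod_subset (Finset.subset_univ _) ?_).symm
    intro x _ hx
    simp only [Finsupp.notMem_support_iff] at hx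
    rw [show k x = 0 from hx, pow_zero]
  have step : ∀ k ∈ Finset.piAntidiag Finset.univ r,
      ((Nat.multinomial Finset.univ k : MvPolynomial (Fin n) ℝ) * ∏ i, X i ^ k i).coeff β
      = if k = ⇑β then (Nat.multinomial Finset.univ k : ℝ) else 0 := by
    intro k _
    rw [key, ← MvPolynomial.C_eq_coe_nat, coeff_C_mul, coeff_monomial]
    have : (Finsupp.equivFunOnFinite.symm k = β) ↔ k = ⇑β := by
      rw [Equiv.symm_apply_eq]; rfl
    by_cases hk : k = ⇑β
    · simp [this, hk]
    · simp [this, hk]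
  rw [Finset.sum_congr rfl step, Finset.sum_ite_eq' (Finset.piAntidiag Finset.univ r) ⇑β]
  simp [Finset.mem_piAntidiag]

/-- **Pólya's theorem.** If `h` is a homogeneous polynomial of degree `d` in `n` variables
that is strictly positive on the standard simplex `Δ_n`, then there is `N` such that for all
`r ≥ N` the polynomial `(x₁ + ⋯ + x_n)^r * h` has all coefficients strictly positive (on
multi-indices of total degree `d + r`). -/
theorem polya_positive_coefficients (n d : ℕ) (hn : 1 ≤ n)
    (h : MvPolynomial (Fin n) ℝ) (hhom : h.IsHomogeneous d)
    (hpos : ∀ u : Fin n → ℝ, (∀ j, 0 ≤ u j) → (∑ j, u j) = 1 → 0 < eval u h) :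
    ∃ N : ℕ, ∀ r : ℕ, N ≤ r → ∀ κ : Fin n →₀ ℕ, (∑ j, κ j) = d + r →
      0 < ((∑ j, (X j : MvPolynomial (Fin n) ℝ)) ^ r * h).coeff κ := by
  classical
  have hdeg : ∀ α ∈ h.support, (∑ i, α i) = d := by
    intro α hα
    have h1 := hhom (MvPolynomial.mem_support_iff.1 hα)
    change (Finsupp.weight (fun _ => 1)) α = d at h1
    rw [← Finsupp.degree_eq_weight_one (R := ℕ)] at h1
    rw [← h1, Finsupp.degree_apply]
    exact (Finset.sum_subset (Finset.subset_univ _)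
      (fun i _ hi => Finsupp.notMem_support_iff.1 hi)).symm
  set g : ℝ × (Fin n → ℝ) → ℝ := fun p =>
    ∑ α ∈ h.support, h.coeff α * ∏ i, ∏ j ∈ Finset.range (α i), (p.2 i - j * p.1) with hgdef
  have hgcont : Continuous g := by
    apply continuous_finset_sum
    intro α _
    exact continuous_const.mul (continuous_finset_prod _ fun i _ =>
      continuous_finset_prod _ fun j _ =>
        ((continuous_apply i).comp continuous_snd).sub (continuous_const.mul continuous_fst))
  have hgzero : ∀ u ∈ stdSimplex ℝ (Fin n), 0 < g (0, u) := by
    intro u hu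
    have h1 := hpos u hu.1 hu.2
    rw [eval_eq'] at h1
    simpa [hgdef, Finset.prod_const] using h1
  have hK : IsCompact (({(0:ℝ)} : Set ℝ) ×ˢ stdSimplex ℝ (Fin n)) :=
    isCompact_singleton.prod (isCompact_stdSimplex _ _)
  have hU : IsOpen (g ⁻¹' Set.Ioi 0) := isOpen_Ioi.preimage hgcont
  have hKU : (({(0:ℝ)} : Set ℝ) ×ˢ stdSimplex ℝ (Fin n)) ⊆ g ⁻¹' Set.Ioi 0 := by
    rintro ⟨t, u⟩ ⟨ht, hu⟩
    rcases Set.mem_singleton_iff.1 ht with rfl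
    exact hgzero u hu
  obtain ⟨δ, hδ, hthick⟩ := hK.exists_thickening_subset_open hU hKU
  refine ⟨⌈δ⁻¹⌉₊ + 1, ?_⟩
  intro r hr κ hκ
  set s : ℕ := d + r with hsdef
  have hs : 0 < (s : ℝ) := by
    have : 0 < r := lt_of_lt_of_le (Nat.succ_pos _) hr
    positivity
  have hinv : δ⁻¹ < (s : ℝ) := by
    calc δ⁻¹ ≤ (⌈δ⁻¹⌉₊ : ℝ) := Nat.le_ceil _
    _ < ((⌈δ⁻¹⌉₊ + 1 : ℕ) : ℝ) := by push_cast; linarith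
    _ ≤ (r : ℝ) := by exact_mod_cast hr
    _ ≤ (s : ℝ) := by exact_mod_cast Nat.le_add_left r d
  have hts : 1 / (s : ℝ) < δ := by
    rw [div_lt_iff₀ hs]
    have := mul_lt_mul_of_pos_left hinv hδ
    rw [mul_inv_cancel₀ hδ.ne'] at this
    linarith
  set u : Fin n → ℝ := fun i => (κ i : ℝ) / s with hudef
  have hu : u ∈ stdSimplex ℝ (Fin n) := by
    constructor
    · intro i
      have : (0:ℝ) ≤ (κ i : ℝ) := Nat.cast_nonneg _
      positivity
    · rw [← Finset.sum_div]
      rw [show (∑ i, ((κ i : ℕ) : ℝ)) = ((∑ i, κ i : ℕ) : ℝ) by push_cast; ring, hκ]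
      exact div_self hs.ne'
  have hmem : (1 / (s : ℝ), u) ∈ Metric.thickening δ
      (({(0:ℝ)} : Set ℝ) ×ˢ stdSimplex ℝ (Fin n)) := by
    rw [Metric.mem_thickening_iff]
    refine ⟨(0, u), ⟨rfl, hu⟩, ?_⟩
    rw [Prod.dist_eq]
    simp only [dist_self]
    rw [Real.dist_eq, sub_zero, abs_of_pos (by positivity)]
    rw [max_eq_left (by positivity)]
    exact hts
  have hgp : 0 < g (1 / (s : ℝ), u) := hthick hmem
  -- the key algebraic identity
  have key : ((∑ j, (X j : MvPolynomial (Fin n) ℝ)) ^ r * h).coeff κ * ∏ i, ((κ i).factorial : ℝ)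
      = (r.factorial : ℝ) * (s : ℝ) ^ d * g (1 / (s : ℝ), u) := by
    conv_lhs => rw [MvPolynomial.as_sum h, Finset.mul_sum, MvPolynomial.coeff_sum,
      Finset.sum_mul]
    simp only [hgdef]
    rw [Finset.mul_sum]
    apply Finset.sum_congr rfl
    intro α hα
    rw [MvPolynomial.coeff_mul_monomial']
    by_cases hle : α ≤ κ
    · rw [if_pos hle]
      have hle' : ∀ i, α i ≤ κ i := Finsupp.le_def.1 hle
      have hsub : ∀ i, (κ - α) i = κ i - α i := fun i => Finsupp.tsub_apply κ α i
      have hsum : (∑ i, (κ - α) i) = r := by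
        simp only [hsub]
        rw [Finset.sum_tsub_distrib _ (fun i _ => hle' i), hκ, hdeg α hα]
        omega
      rw [polya_aux_coeff_sum_pow, if_pos hsum]
      have hnat : (Nat.multinomial Finset.univ ⇑(κ - α)) * ∏ i, (κ i).factorial
          = r.factorial * ∏ i, (κ i).descFactorial (α i) := by
        have h1 : ∏ i, (κ i).factorial
            = (∏ i, ((κ - α) i).factorial) * ∏ i, (κ i).descFactorial (α i) := by
          rw [← Finset.prod_mul_distrib]
          apply Finset.prod_congr rfl
          intro i _
          rw [hsub]
          exact (Nat.factorial_mul_descFactorial (hle' i)).symm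
        rw [h1, ← mul_assoc, mul_comm (Nat.multinomial _ _) _, Nat.multinomial_spec, hsum]
      have hnatR : (Nat.multinomial Finset.univ ⇑(κ - α) : ℝ) * ∏ i, ((κ i).factorial : ℝ)
          = (r.factorial : ℝ) * ∏ i, (((κ i).descFactorial (α i)) : ℝ) := by
        exact_mod_cast congrArg (Nat.cast : ℕ → ℝ) hnat
      have hdesc : ∏ i, (((κ i).descFactorial (α i) : ℝ))
          = (s : ℝ) ^ d * ∏ i, ∏ j ∈ Finset.range (α i), (u i - j * (1 / (s : ℝ))) := by
        have h2 : ∀ i, (((κ i).descFactorial (α i)) : ℝ)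
            = (s : ℝ) ^ (α i) * ∏ j ∈ Finset.range (α i), (u i - j * (1 / (s : ℝ))) := by
          intro i
          rw [polya_aux_descFactorial]
          rw [show (s : ℝ) ^ (α i) = ∏ _j ∈ Finset.range (α i), (s : ℝ) by
            rw [Finset.prod_const, Finset.card_range]]
          rw [← Finset.prod_mul_distrib]
          apply Finset.prod_congr rfl
          intro j _
          rw [hudef]
          field_simp
        rw [Finset.prod_congr rfl (fun i _ => h2 i), Finset.prod_mul_distrib,
          Finset.prod_pow_eq_pow_sum, hdeg α hα]
      calc ((Nat.multinomial Finset.univ ⇑(κ - α) : ℝ) * coeff α h) * ∏ i, ((κ i).factorial : ℝ)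
          = coeff α h * ((Nat.multinomial Finset.univ ⇑(κ - α) : ℝ) * ∏ i, ((κ i).factorial : ℝ)) := by
            ring
        _ = coeff α h * ((r.factorial : ℝ) * ∏ i, (((κ i).descFactorial (α i)) : ℝ)) := by
            rw [hnatR]
        _ = coeff α h * ((r.factorial : ℝ) * ((s : ℝ) ^ d
              * ∏ i, ∏ j ∈ Finset.range (α i), (u i - j * (1 / (s : ℝ))))) := by rw [hdesc]
        _ = (r.factorial : ℝ) * (s : ℝ) ^ d
              * (coeff α h * ∏ i, ∏ j ∈ Finset.range (α i), (u i - j * (1 / (s : ℝ)))) := by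
            ring
    · rw [if_neg hle]
      obtain ⟨i₀, hi₀⟩ : ∃ i, κ i < α i := by
        by_contra hc
        push_neg at hc
        exact hle (Finsupp.le_def.2 hc)
      have hzero : ∏ j ∈ Finset.range (α i₀), (u i₀ - j * (1 / (s : ℝ))) = 0 := by
        apply Finset.prod_eq_zero (Finset.mem_range.2 hi₀)
        rw [hudef]
        field_simp
        ring
      have hz2 : ∏ i, ∏ j ∈ Finset.range (α i), (u i - j * (1 / (s : ℝ))) = 0 :=
        Finset.prod_eq_zero (Finset.mem_univ i₀) hzero
      rw [hz2]
      ring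
  have hfac : 0 < ∏ i, ((κ i).factorial : ℝ) := by positivity
  have hrhs : 0 < (r.factorial : ℝ) * (s : ℝ) ^ d * g (1 / (s : ℝ), u) := by
    apply mul_pos (mul_pos (by positivity) (by positivity)) hgp
  nlinarith [key, hfac, hrhs]
end

section
/- (Strict primal feasibility, Lemma 3.6.) Let τ = (τ₁,…,τ_p) ∈ ℕᵖ. There exists y : Λ_{2τ} → ℝ such that: (i) Σ_{α∈Λ_{2τ}} g_α y_α = 1, where (g_α) are the coefficients of g(x) := ∏_{i=1}^p (Σ_{j=1}^{n_i} (x⁽ⁱ⁾_j)²)^{τ_i}; (ii) the moment matrix M(y) is positive definite; and (iii) M(y) is entrywise strictly positive. That is, the DNN relaxation is strictly feasible. -/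
open MvPolynomial Finset

/-- Grouped multi-indices of multidegree `τ`. -/
def Lam {p : ℕ} (n τ : Fin p → ℕ) : Type :=
  {β : ∀ i : Fin p, Fin (n i) → ℕ // ∀ i, ∑ j, β i j = τ i}

theorem Lam.entry_le {p : ℕ} {n τ : Fin p → ℕ} (β : Lam n τ) (i : Fin p) (j : Fin (n i)) :
    β.1 i j < τ i + 1 := by
  refine Nat.lt_succ_of_le ?_
  have h := Finset.single_le_sum (f := fun j' => β.1 i j') (fun _ _ => Nat.zero_le _)
    (Finset.mem_univ j)
  exact h.trans (le_of_eq (β.2 i))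

noncomputable instance {p : ℕ} (n τ : Fin p → ℕ) : Fintype (Lam n τ) :=
  Fintype.ofInjective
    (fun β : Lam n τ =>
      (fun i j => (⟨β.1 i j, β.entry_le i j⟩ : Fin (τ i + 1)) :
        ∀ i : Fin p, Fin (n i) → Fin (τ i + 1)))
    (by
      intro β γ h
      apply Subtype.ext
      funext i j
      exact congrArg Fin.val (congrFun (congrFun h i) j))

/-- Sum of two grouped multi-indices of the same multidegree `τ`, of multidegree `2τ`. -/
def Lam.add2 {p : ℕ} {n τ : Fin p → ℕ} (β γ : Lam n τ) : Lam n (fun i => 2 * τ i) :=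
  ⟨fun i j => β.1 i j + γ.1 i j, fun i => by
    rw [Finset.sum_add_distrib, β.2 i, γ.2 i]; ring⟩

/-- The value of the monomial `x^β`. -/
noncomputable def Lam.mono {p : ℕ} {n τ : Fin p → ℕ} (β : Lam n τ)
    (x : ∀ i : Fin p, Fin (n i) → ℝ) : ℝ :=
  ∏ i, ∏ j, x i j ^ β.1 i j

/-- The exponent Finsupp corresponding to a grouped multi-index. -/
noncomputable def Lam.toFinsupp {p : ℕ} {n τ : Fin p → ℕ} (β : Lam n τ) :
    (Σ i : Fin p, Fin (n i)) →₀ ℕ :=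
  Finsupp.equivFunOnFinite.symm (fun q => β.1 q.1 q.2)

/-- `f` is a multi-form of multidegree `d`. -/
def IsMultiForm {p : ℕ} {n : Fin p → ℕ} (f : MvPolynomial (Σ i : Fin p, Fin (n i)) ℝ)
    (d : Fin p → ℕ) : Prop :=
  ∀ m ∈ f.support, ∀ i : Fin p, ∑ j, m ⟨i, j⟩ = d i

/-- Evaluation of a polynomial at a grouped point. -/
noncomputable def evalAt {p : ℕ} {n : Fin p → ℕ} (x : ∀ i : Fin p, Fin (n i) → ℝ)
    (f : MvPolynomial (Σ i : Fin p, Fin (n i)) ℝ) : ℝ :=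
  MvPolynomial.eval (fun q : Σ i : Fin p, Fin (n i) => x q.1 q.2) f

/-- The nonnegative multi-sphere. -/
def NonnegSphere {p : ℕ} {n : Fin p → ℕ} (x : ∀ i : Fin p, Fin (n i) → ℝ) : Prop :=
  ∀ i, (∀ j, 0 ≤ x i j) ∧ ∑ j, (x i j) ^ 2 = 1

/-- The multi-form `g(x) = ∏ i (∑ j (x⁽ⁱ⁾ⱼ)²)^{τ i}`. -/
noncomputable def gPoly {p : ℕ} (n τ : Fin p → ℕ) :
    MvPolynomial (Σ i : Fin p, Fin (n i)) ℝ :=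
  ∏ i, (∑ j, (X (⟨i, j⟩ : Σ i : Fin p, Fin (n i)) : MvPolynomial (Σ i : Fin p, Fin (n i)) ℝ) ^ 2) ^ τ i

/-- The moment matrix of `y : Λ_{2τ} → ℝ`. -/
def momentMatrix {p : ℕ} {n τ : Fin p → ℕ} (y : Lam n (fun i => 2 * τ i) → ℝ) :
    Matrix (Lam n τ) (Lam n τ) ℝ :=
  Matrix.of fun β γ => y (β.add2 γ)

-- ## auxiliary lemmas

variable {p : ℕ} {n τ : Fin p → ℕ}

namespace Lam

theorem add2_comm (β γ : Lam n τ) : β.add2 γ = γ.add2 β := by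
  apply Subtype.ext; funext i j; exact Nat.add_comm _ _

theorem mono_add2 (β γ : Lam n τ) (x : ∀ i : Fin p, Fin (n i) → ℝ) :
    (β.add2 γ).mono x = β.mono x * γ.mono x := by
  unfold Lam.mono Lam.add2
  rw [← Finset.prod_mul_distrib]
  refine Finset.prod_congr rfl fun i _ => ?_
  rw [← Finset.prod_mul_distrib]
  exact Finset.prod_congr rfl fun j _ => pow_add _ _ _

theorem toFinsupp_apply (β : Lam n τ) (q : Σ i : Fin p, Fin (n i)) :
    β.toFinsupp q = β.1 q.1 q.2 := rfl

theorem toFinsupp_injective : Function.Injective (Lam.toFinsupp (n := n) (τ := τ)) := by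
  intro β γ h
  apply Subtype.ext; funext i j
  exact DFunLike.congr_fun h ⟨i, j⟩

theorem mono_eq_prod (β : Lam n τ) (x : ∀ i : Fin p, Fin (n i) → ℝ) :
    β.mono x = ∏ q : Σ i : Fin p, Fin (n i), x q.1 q.2 ^ β.toFinsupp q := by
  rw [← Finset.univ_sigma_univ, Finset.prod_sigma]; rfl

end Lam

theorem sum_coeff_mono (f : MvPolynomial (Σ i : Fin p, Fin (n i)) ℝ) {d : Fin p → ℕ}
    (hf : IsMultiForm f d) (x : ∀ i : Fin p, Fin (n i) → ℝ) :
    ∑ α : Lam n d, f.coeff α.toFinsupp * α.mono x = evalAt x f := by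
  classical
  have himg : f.support ⊆ Finset.image Lam.toFinsupp (Finset.univ : Finset (Lam n d)) := by
    intro m hm
    refine Finset.mem_image.2 ⟨⟨fun i j => m ⟨i, j⟩, fun i => hf m hm i⟩, Finset.mem_univ _, ?_⟩
    ext q
    rfl
  calc ∑ α : Lam n d, f.coeff α.toFinsupp * α.mono x
      = ∑ m ∈ Finset.image Lam.toFinsupp (Finset.univ : Finset (Lam n d)),
          f.coeff m * ∏ q, x q.1 q.2 ^ m q := by
        rw [Finset.sum_image (fun a _ b _ h => Lam.toFinsupp_injective h)]
        exact Finset.sum_congr rfl fun α _ => by rw [Lam.mono_eq_prod]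
    _ = ∑ m ∈ f.support, f.coeff m * ∏ q, x q.1 q.2 ^ m q := by
        refine (Finset.sum_subset himg fun m _ hm => ?_).symm
        rw [MvPolynomial.notMem_support_iff.1 hm, zero_mul]
    _ = evalAt x f := (MvPolynomial.eval_eq' _ f).symm

theorem IsWeightedHomogeneous.pow' {σ M R : Type*} [CommSemiring R] [AddCommMonoid M]
    {w : σ → M} {φ : MvPolynomial σ R} {m : M}
    (hφ : φ.IsWeightedHomogeneous w m) (k : ℕ) : (φ ^ k).IsWeightedHomogeneous w (k • m) := by
  induction k with
  | zero => simpa using MvPolynomial.isWeightedHomogeneous_one R w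
  | succ k ih => rw [pow_succ, succ_nsmul]; exact ih.mul hφ

theorem gPoly_isMultiForm : IsMultiForm (gPoly n τ) (fun i => 2 * τ i) := by
  classical
  intro m hm i
  set w : (Σ i : Fin p, Fin (n i)) → ℕ := fun q => if q.1 = i then 1 else 0 with hw
  have hg : (gPoly n τ).IsWeightedHomogeneous w (2 * τ i) := by
    have hdeg : (2 * τ i) = ∑ i' : Fin p, (τ i') • (if i' = i then 2 else 0) := by
      rw [Finset.sum_eq_single i]
      · simp [two_mul, mul_comm]
      · intro b _ hb; simp [hb]
      · simp
    rw [gPoly, hdeg]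
    apply MvPolynomial.IsWeightedHomogeneous.prod
    intro i' _
    apply IsWeightedHomogeneous.pow'
    apply MvPolynomial.IsWeightedHomogeneous.sum
    intro j _
    have h1 := MvPolynomial.isWeightedHomogeneous_X (R := ℝ) w (⟨i', j⟩ : Σ i : Fin p, Fin (n i))
    have h2 := h1.mul h1
    rw [← sq] at h2
    have : w ⟨i', j⟩ + w ⟨i', j⟩ = if i' = i then 2 else 0 := by
      simp only [hw]
      by_cases h : i' = i <;> simp [h]
    rwa [this] at h2
  have hcoeff : (gPoly n τ).coeff m ≠ 0 := MvPolynomial.mem_support_iff.1 hm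
  have hdeg := hg hcoeff
  -- hdeg : weight w m = 2 * τ i
  rw [Finsupp.weight_apply, Finsupp.sum_fintype _ _ (fun q => by simp)] at hdeg
  show ∑ j : Fin (n i), m ⟨i, j⟩ = 2 * τ i
  rw [← hdeg, ← Finset.univ_sigma_univ, Finset.sum_sigma]
  rw [Finset.sum_eq_single i]
  · refine Finset.sum_congr rfl fun j _ => ?_
    simp [hw]
  · intro b _ hb
    refine Finset.sum_eq_zero fun j _ => ?_
    simp [hw, hb]
  · simp

theorem mono_lin_indep (c : Lam n τ → ℝ)
    (h : ∀ x : ∀ i : Fin p, Fin (n i) → ℝ, ∑ β : Lam n τ, c β * β.mono x = 0) :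
    c = 0 := by
  classical
  set P : MvPolynomial (Σ i : Fin p, Fin (n i)) ℝ :=
    ∑ β : Lam n τ, MvPolynomial.monomial β.toFinsupp (c β) with hP
  have hPz : P = 0 := by
    apply MvPolynomial.funext
    intro x
    rw [map_zero, hP, map_sum, ← h (fun i j => x ⟨i, j⟩)]
    refine Finset.sum_congr rfl fun β _ => ?_
    rw [MvPolynomial.eval_monomial, Lam.mono_eq_prod,
      Finsupp.prod_fintype _ _ (fun q => pow_zero _)]
  funext β
  have hc : P.coeff β.toFinsupp = c β := by
    rw [hP, MvPolynomial.coeff_sum, Finset.sum_eq_single β]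
    · rw [MvPolynomial.coeff_monomial, if_pos rfl]
    · intro γ _ hγ
      rw [MvPolynomial.coeff_monomial, if_neg (fun hh => hγ (Lam.toFinsupp_injective hh))]
    · simp
  rw [Pi.zero_apply, ← hc, hPz, MvPolynomial.coeff_zero]

theorem exists_points (n τ : Fin p → ℕ) :
    ∃ T : Finset (∀ i : Fin p, Fin (n i) → ℝ),
      ∀ c : Lam n τ → ℝ, (∀ x ∈ T, ∑ β : Lam n τ, c β * β.mono x = 0) → c = 0 := by
  classical
  set V : (∀ i : Fin p, Fin (n i) → ℝ) → EuclideanSpace ℝ (Lam n τ) :=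
    fun x => WithLp.toLp 2 (fun β : Lam n τ => β.mono x) with hV
  have hspan : Submodule.span ℝ (Set.range V) = ⊤ := by
    rw [← Submodule.orthogonal_eq_bot_iff]
    rw [Submodule.eq_bot_iff]
    intro c hc
    have hc' : ∀ x, ∑ β : Lam n τ, c β * Lam.mono β x = 0 := by
      intro x
      have := (Submodule.mem_orthogonal _ _).1 hc (V x) (Submodule.subset_span ⟨x, rfl⟩)
      simpa [hV, PiLp.inner_apply, RCLike.inner_apply, mul_comm] using this
    have hc0 := mono_lin_indep _ hc'
    simpa using hc0
  -- each standard basis vector is in the span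
  have hmem : ∀ β : Lam n τ, ∃ cc : (∀ i : Fin p, Fin (n i) → ℝ) →₀ ℝ,
      (cc.sum fun x a => a • V x) = EuclideanSpace.single β (1 : ℝ) := by
    intro β
    have : EuclideanSpace.single β (1 : ℝ) ∈ Submodule.span ℝ (Set.range V) := by
      rw [hspan]; trivial
    exact Finsupp.mem_span_range_iff_exists_finsupp.1 this
  choose cc hcc using hmem
  refine ⟨(Finset.univ : Finset (Lam n τ)).biUnion (fun β => (cc β).support), ?_⟩
  intro c hc
  funext β₀
  -- linear functional
  set L : EuclideanSpace ℝ (Lam n τ) →ₗ[ℝ] ℝ :=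
    { toFun := fun v => ∑ γ : Lam n τ, c γ * v γ
      map_add' := by
        intro a b
        simp [PiLp.add_apply, mul_add, Finset.sum_add_distrib]
      map_smul' := by
        intro r a
        simp [PiLp.smul_apply, Finset.mul_sum, smul_eq_mul]
        exact Finset.sum_congr rfl fun γ _ => by ring } with hL
  have h1 : L (EuclideanSpace.single β₀ (1 : ℝ)) = c β₀ := by
    simp [hL, EuclideanSpace.single_apply]
  have h2 : L (EuclideanSpace.single β₀ (1 : ℝ)) = 0 := by
    rw [← hcc β₀, map_finsuppSum, Finsupp.sum]
    refine Finset.sum_eq_zero fun x hx => ?_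
    have hxT : x ∈ (Finset.univ : Finset (Lam n τ)).biUnion (fun β => (cc β).support) :=
      Finset.mem_biUnion.2 ⟨β₀, Finset.mem_univ _, hx⟩
    have : L (V x) = 0 := by
      simpa [hL, hV] using hc x hxT
    rw [map_smul, this, smul_zero]
  rw [Pi.zero_apply, ← h1, h2]

set_option maxHeartbeats 1000000 in
/-- **Strict primal feasibility (Lemma 3.6).** There is a vector `y : Λ_{2τ} → ℝ` with
`Σ_α g_α y_α = 1` whose moment matrix is positive definite and entrywise strictly positive,
i.e. the DNN relaxation is strictly feasible. -/
theorem dnn_strict_primal_feasibility (p : ℕ) (hp : 1 ≤ p)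
    (n : Fin p → ℕ) (hn : ∀ i, 1 ≤ n i) (τ : Fin p → ℕ) :
    ∃ y : Lam n (fun i => 2 * τ i) → ℝ,
      (∑ α : Lam n (fun i => 2 * τ i), (gPoly n τ).coeff α.toFinsupp * y α) = 1 ∧
      (momentMatrix y).PosDef ∧
      (∀ β γ : Lam n τ, 0 < momentMatrix y β γ) := by
  classical
  obtain ⟨T, hT⟩ := exists_points (p := p) n τ
  set ones : ∀ i : Fin p, Fin (n i) → ℝ := fun _ _ => 1 with hones
  have hmono_ones : ∀ {d : Fin p → ℕ} (α : Lam n d), α.mono ones = 1 := by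
    intro d α; simp [Lam.mono, hones]
  set w : ℝ := 1 + ∑ α : Lam n (fun i => 2 * τ i), |∑ x ∈ T, α.mono x| with hwdef
  have hw1 : 1 ≤ w := by
    have : 0 ≤ ∑ α : Lam n (fun i => 2 * τ i), |∑ x ∈ T, α.mono x| :=
      Finset.sum_nonneg fun _ _ => abs_nonneg _
    linarith
  set y0 : Lam n (fun i => 2 * τ i) → ℝ :=
    fun α => w * α.mono ones + ∑ x ∈ T, α.mono x with hy0def
  have hy0pos : ∀ α, 0 < y0 α := by
    intro α
    have h1 : |∑ x ∈ T, α.mono x| ≤ ∑ α' : Lam n (fun i => 2 * τ i), |∑ x ∈ T, (α').mono x| :=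
      Finset.single_le_sum (f := fun α' : Lam n (fun i => 2 * τ i) => |∑ x ∈ T, (α').mono x|)
        (fun _ _ => abs_nonneg _) (Finset.mem_univ α)
    have h2 := neg_abs_le (∑ x ∈ T, α.mono x)
    have hm := hmono_ones α
    simp only [hy0def, hm, mul_one]
    rw [hwdef]
    linarith
  have gform := gPoly_isMultiForm (n := n) (τ := τ)
  have hev : ∀ x : ∀ i : Fin p, Fin (n i) → ℝ,
      evalAt x (gPoly n τ) = ∏ i, (∑ j, x i j ^ 2) ^ τ i := by
    intro x
    unfold evalAt gPoly
    simp only [map_prod, map_pow, map_sum, MvPolynomial.eval_X]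
  have hev_nonneg : ∀ x, 0 ≤ evalAt x (gPoly n τ) := by
    intro x
    rw [hev]
    exact Finset.prod_nonneg fun i _ =>
      pow_nonneg (Finset.sum_nonneg fun j _ => sq_nonneg _) _
  have hev_ones : 0 < evalAt ones (gPoly n τ) := by
    rw [hev]
    refine Finset.prod_pos fun i _ => pow_pos ?_ _
    have : (∑ _j : Fin (n i), ((1:ℝ)) ^ 2) = (n i : ℝ) := by simp
    simp only [hones]
    rw [this]
    exact_mod_cast Nat.lt_of_lt_of_le Nat.zero_lt_one (hn i)
  -- the normalisation constant
  set S : ℝ := w * evalAt ones (gPoly n τ) + ∑ x ∈ T, evalAt x (gPoly n τ) with hSdef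
  have hSpos : 0 < S := by
    have h1 : 0 < w * evalAt ones (gPoly n τ) := mul_pos (by linarith) hev_ones
    have h2 : 0 ≤ ∑ x ∈ T, evalAt x (gPoly n τ) :=
      Finset.sum_nonneg fun x _ => hev_nonneg x
    rw [hSdef]; linarith
  have hS : ∑ α : Lam n (fun i => 2 * τ i), (gPoly n τ).coeff α.toFinsupp * y0 α = S := by
    have hterm : ∀ α : Lam n (fun i => 2 * τ i), (gPoly n τ).coeff α.toFinsupp * y0 α
        = w * ((gPoly n τ).coeff α.toFinsupp * α.mono ones)
          + ∑ x ∈ T, (gPoly n τ).coeff α.toFinsupp * α.mono x := by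
      intro α
      simp only [hy0def, mul_add, Finset.mul_sum]
      ring
    rw [Finset.sum_congr rfl fun α _ => hterm α, Finset.sum_add_distrib, ← Finset.mul_sum,
      sum_coeff_mono _ gform ones, Finset.sum_comm, hSdef]
    congr 1
    exact Finset.sum_congr rfl fun x _ => sum_coeff_mono _ gform x
  refine ⟨fun α => S⁻¹ * y0 α, ?_, ?_, ?_⟩
  · have : ∑ α : Lam n (fun i => 2 * τ i), (gPoly n τ).coeff α.toFinsupp * (S⁻¹ * y0 α)
        = S⁻¹ * ∑ α : Lam n (fun i => 2 * τ i), (gPoly n τ).coeff α.toFinsupp * y0 α := by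
      rw [Finset.mul_sum]
      exact Finset.sum_congr rfl fun α _ => by ring
    rw [this, hS, inv_mul_cancel₀ (ne_of_gt hSpos)]
  · rw [Matrix.posDef_iff_dotProduct_mulVec]
    constructor
    · show Matrix.conjTranspose (momentMatrix (fun α => S⁻¹ * y0 α)) = momentMatrix (fun α => S⁻¹ * y0 α)
      ext β γ
      simp [momentMatrix, Matrix.conjTranspose_apply, Lam.add2_comm γ β]
    · intro v hv
      -- quadratic form setup
      set QF : (Lam n (fun i => 2 * τ i) → ℝ) → ℝ :=
        fun z => ∑ β : Lam n τ, ∑ γ : Lam n τ, v β * v γ * z (β.add2 γ) with hQF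
      have hdot : dotProduct (star v) ((momentMatrix (fun α => S⁻¹ * y0 α)).mulVec v)
          = QF (fun α => S⁻¹ * y0 α) := by
        simp only [hQF, dotProduct, Matrix.mulVec, momentMatrix, Matrix.of_apply,
          Pi.star_apply, star_trivial, Finset.mul_sum]
        exact Finset.sum_congr rfl fun β _ => Finset.sum_congr rfl fun γ _ => by ring
      have hQF_point : ∀ x : ∀ i : Fin p, Fin (n i) → ℝ,
          QF (fun α => α.mono x) = (∑ β : Lam n τ, v β * β.mono x) ^ 2 := by
        intro x
        rw [hQF, sq, Finset.sum_mul_sum]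
        exact Finset.sum_congr rfl fun β _ => Finset.sum_congr rfl fun γ _ => by
          simp only [Lam.mono_add2]; ring
      have QF_add : ∀ z1 z2 : Lam n (fun i => 2 * τ i) → ℝ,
          QF (fun α => z1 α + z2 α) = QF z1 + QF z2 := by
        intro z1 z2
        simp only [hQF, mul_add, Finset.sum_add_distrib]
      have QF_smul : ∀ (a : ℝ) (z : Lam n (fun i => 2 * τ i) → ℝ),
          QF (fun α => a * z α) = a * QF z := by
        intro a z
        simp only [hQF, Finset.mul_sum]
        exact Finset.sum_congr rfl fun β _ => Finset.sum_congr rfl fun γ _ => by ring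
      have QF_tsum : QF (fun α => ∑ x ∈ T, α.mono x) = ∑ x ∈ T, QF (fun α => α.mono x) := by
        simp only [hQF, Finset.mul_sum]
        calc ∑ β : Lam n τ, ∑ γ : Lam n τ, ∑ x ∈ T, v β * v γ * (β.add2 γ).mono x
            = ∑ β : Lam n τ, ∑ x ∈ T, ∑ γ : Lam n τ, v β * v γ * (β.add2 γ).mono x :=
              Finset.sum_congr rfl fun β _ => Finset.sum_comm
          _ = ∑ x ∈ T, ∑ β : Lam n τ, ∑ γ : Lam n τ, v β * v γ * (β.add2 γ).mono x :=
              Finset.sum_comm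
      have hQF_expand : QF (fun α => S⁻¹ * y0 α)
          = S⁻¹ * (w * QF (fun α => α.mono ones) + ∑ x ∈ T, QF (fun α => α.mono x)) := by
        have e0 : QF (fun α => S⁻¹ * y0 α) = S⁻¹ * QF y0 := QF_smul S⁻¹ y0
        have e1 : QF (fun α => w * α.mono ones + ∑ x ∈ T, α.mono x)
            = QF (fun α => w * α.mono ones) + QF (fun α => ∑ x ∈ T, α.mono x) :=
          QF_add (fun α => w * α.mono ones) (fun α => ∑ x ∈ T, α.mono x)
        have e2 : QF (fun α => w * α.mono ones) = w * QF (fun α => α.mono ones) :=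
          QF_smul w (fun α => α.mono ones)
        rw [e0, hy0def, e1, e2, QF_tsum]
      have hQx : ∃ x ∈ T, (∑ β : Lam n τ, v β * β.mono x) ≠ 0 := by
        by_contra hcon
        push_neg at hcon
        exact hv (hT v hcon)
      obtain ⟨x₀, hx₀T, hx₀⟩ := hQx
      have hsum_pos : 0 < ∑ x ∈ T, QF (fun α => α.mono x) := by
        refine Finset.sum_pos' (fun x _ => ?_) ⟨x₀, hx₀T, ?_⟩
        · rw [hQF_point x]; exact sq_nonneg _
        · rw [hQF_point x₀]; exact sq_pos_of_ne_zero hx₀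
      have hfirst : 0 ≤ w * QF (fun α => α.mono ones) := by
        refine mul_nonneg (by linarith) ?_
        rw [hQF_point ones]; exact sq_nonneg _
      rw [hdot, hQF_expand]
      exact mul_pos (inv_pos.2 hSpos) (by linarith)
  · intro β γ
    show 0 < S⁻¹ * y0 (β.add2 γ)
    exact mul_pos (inv_pos.2 hSpos) (hy0pos _)
end

section
/- (Strict dual feasibility, Lemma 3.7.) Let τ = (τ₁,…,τ_p) ∈ ℕᵖ and let f be a multi-form of multidegree 2τ = (2τ₁,…,2τ_p). Then there exist γ ∈ ℝ, a positive definite symmetric matrix S and a symmetric matrix T with all entries strictly positive (both indexed by Λ_τ × Λ_τ) such that for all x ∈ ℝ^{n₁}×…×ℝ^{n_p}, f(x) − γ·g(x) = (x^[τ])ᵀ (S + T) (x^[τ]), where g(x) := ∏_{i=1}^p (Σ_{j=1}^{n_i} (x⁽ⁱ⁾_j)²)^{τ_i}. -/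
open MvPolynomial Finset Matrix

lemma exists_le_sum' {N : ℕ} (m : Fin N → ℕ) (a : ℕ) (h : a ≤ ∑ j, m j) :
    ∃ b : Fin N → ℕ, (∀ j, b j ≤ m j) ∧ ∑ j, b j = a := by
  induction a with
  | zero => exact ⟨0, fun j => Nat.zero_le _, by simp⟩
  | succ a ih =>
    obtain ⟨b, hb, hsum⟩ := ih (le_of_lt (Nat.lt_of_succ_le h))
    have hlt : ∑ j, b j < ∑ j, m j := by omega
    obtain ⟨j, hj⟩ : ∃ j, b j < m j := by
      by_contra hc; push_neg at hc
      exact absurd (Finset.sum_le_sum fun j _ => hc j) (not_le.mpr hlt)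
    refine ⟨Function.update b j (b j + 1), fun k => ?_, ?_⟩
    · rcases eq_or_ne k j with rfl | hk
      · simpa using hj
      · simpa [Function.update_of_ne hk] using hb k
    · classical
      rw [Finset.sum_update_of_mem (Finset.mem_univ j)]
      rw [← Finset.sum_erase_add _ _ (Finset.mem_univ j)] at hsum
      simp only [Finset.sdiff_singleton_eq_erase] at *
      omega

/-- Vectors in `Fin N → ℕ` with entry sum `t`. -/
def Vec (N t : ℕ) : Type := {a : Fin N → ℕ // ∑ j, a j = t}

lemma Vec.entry_le {N t : ℕ} (a : Vec N t) (j : Fin N) : a.1 j < t + 1 := by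
  refine Nat.lt_succ_of_le ?_
  have h := Finset.single_le_sum (f := fun j' => a.1 j') (fun _ _ => Nat.zero_le _)
    (Finset.mem_univ j)
  exact h.trans (le_of_eq a.2)

noncomputable instance (N t : ℕ) : Fintype (Vec N t) :=
  Fintype.ofInjective
    (fun a : Vec N t => (fun j => (⟨a.1 j, a.entry_le j⟩ : Fin (t + 1))))
    (by
      intro a b h
      apply Subtype.ext
      funext j
      exact congrArg Fin.val (congrFun h j))

/-- Expansion of `(∑ y²)^t` with all coefficients at least 1. -/
lemma pow_sum_sq_expand (N t : ℕ) (hN : 1 ≤ N) :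
    ∃ C : Vec N t → ℝ, (∀ a, 1 ≤ C a) ∧
      ∀ y : Fin N → ℝ, (∑ j, y j ^ 2) ^ t = ∑ a : Vec N t, C a * ∏ j, y j ^ (2 * a.1 j) := by
  classical
  induction t with
  | zero =>
    refine ⟨fun _ => 1, fun _ => le_refl 1, fun y => ?_⟩
    have hz : ∀ a : Vec N 0, ∀ j, a.1 j = 0 := fun a j => by
      simpa using (Finset.sum_eq_zero_iff).mp a.2 j (Finset.mem_univ j)
    haveI : Unique (Vec N 0) := ⟨⟨⟨0, by simp⟩⟩, fun a => Subtype.ext (funext fun j => hz a j)⟩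
    rw [Fintype.sum_unique (fun a : Vec N 0 => (1 : ℝ) * ∏ j, y j ^ (2 * a.1 j))]
    simp [hz]
  | succ t ih =>
    obtain ⟨C, hC1, hCeq⟩ := ih
    set push : Vec N t × Fin N → Vec N (t + 1) := fun q =>
      ⟨fun k => q.1.1 k + if k = q.2 then 1 else 0, by
        rw [Finset.sum_add_distrib, q.1.2, Finset.sum_ite_eq' Finset.univ q.2 (fun _ => 1)]
        simp⟩ with hpush
    have hfiber : ∀ b : Vec N (t + 1), ∃ q : Vec N t × Fin N, push q = b := by
      intro b
      obtain ⟨j, hj⟩ : ∃ j, 1 ≤ b.1 j := by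
        by_contra hc; push_neg at hc
        have : ∑ j, b.1 j = 0 := Finset.sum_eq_zero fun j _ => by have := hc j; omega
        rw [b.2] at this; omega
      have hsplit : ∑ k ∈ Finset.univ.erase j, b.1 k + b.1 j = t + 1 := by
        rw [Finset.sum_erase_add _ _ (Finset.mem_univ j), b.2]
      have hsa : ∑ k, Function.update b.1 j (b.1 j - 1) k = t := by
        rw [Finset.sum_update_of_mem (Finset.mem_univ j)]
        simp only [Finset.sdiff_singleton_eq_erase]
        omega
      refine ⟨⟨⟨Function.update b.1 j (b.1 j - 1), hsa⟩, j⟩, ?_⟩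
      apply Subtype.ext
      funext k
      show Function.update b.1 j (b.1 j - 1) k + (if k = j then 1 else 0) = b.1 k
      rcases eq_or_ne k j with rfl | hk
      · simp; omega
      · simp [Function.update_of_ne hk, hk]
    refine ⟨fun b => ∑ q ∈ Finset.univ.filter (fun q => push q = b), C q.1, fun b => ?_,
      fun y => ?_⟩
    · obtain ⟨q, hq⟩ := hfiber b
      have hqmem : q ∈ Finset.univ.filter (fun q' => push q' = b) := by simp [hq]
      calc (1 : ℝ) ≤ C q.1 := hC1 q.1
        _ ≤ _ := Finset.single_le_sum (f := fun q' : Vec N t × Fin N => C q'.1)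
            (fun q' _ => zero_le_one.trans (hC1 q'.1)) hqmem
    · have key : (∑ j, y j ^ 2) ^ (t + 1)
          = ∑ q : Vec N t × Fin N, C q.1 * ∏ k, y k ^ (2 * (push q).1 k) := by
        rw [pow_succ, hCeq y, Finset.sum_mul]
        rw [Fintype.sum_prod_type]
        refine Finset.sum_congr rfl fun a _ => ?_
        rw [Finset.mul_sum]
        refine Finset.sum_congr rfl fun j _ => ?_
        have hterm : ∀ k, y k ^ (2 * ((push (a, j)).1 k))
            = y k ^ (2 * a.1 k) * (if k = j then y k ^ 2 else 1) := by
          intro k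
          show y k ^ (2 * (a.1 k + if k = j then 1 else 0)) = _
          rcases eq_or_ne k j with rfl | hk
          · simp [pow_add, mul_add]
          · simp [hk]
        rw [Finset.prod_congr rfl (fun k _ => hterm k), Finset.prod_mul_distrib,
          Finset.prod_ite_eq' Finset.univ j (fun k => y k ^ 2)]
        simp only [Finset.mem_univ, if_true]
        ring
      rw [key, ← Finset.sum_fiberwise Finset.univ push
        (fun q => C q.1 * ∏ k, y k ^ (2 * (push q).1 k))]
      refine Finset.sum_congr rfl fun b _ => ?_
      rw [Finset.sum_mul]
      refine Finset.sum_congr rfl fun q hq => ?_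
      rw [(Finset.mem_filter.mp hq).2]

section quadHelpers
variable {Λ : Type*} [Fintype Λ]

lemma quad_diag [DecidableEq Λ] (c : Λ → ℝ) (v : Λ → ℝ) :
    ∑ β, ∑ γ, Matrix.diagonal c β γ * (v β * v γ) = ∑ β, c β * v β ^ 2 := by
  refine Finset.sum_congr rfl fun β _ => ?_
  have : ∀ γ, Matrix.diagonal c β γ * (v β * v γ)
      = if β = γ then c β * (v β * v γ) else 0 := by
    intro γ; by_cases h : β = γ <;> simp [Matrix.diagonal_apply, h]
  rw [Finset.sum_congr rfl fun γ _ => this γ, Finset.sum_ite_eq]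
  simp only [Finset.mem_univ, if_true]; ring

lemma abs_mul_abs_le_sum_sq (a b s : ℝ) (ha : a ^ 2 ≤ s) (hb : b ^ 2 ≤ s) :
    |a| * |b| ≤ s := by
  nlinarith [sq_abs a, sq_abs b, abs_nonneg a, abs_nonneg b, sq_nonneg (|a| - |b|)]

end quadHelpers

/-- **Strict dual feasibility (Lemma 3.7).** For any multi-form `f` of multidegree `2τ` there
are `c ∈ ℝ`, a positive definite symmetric matrix `S` and a symmetric entrywise strictly
positive matrix `T`, indexed by `Λ_τ`, with
`f(x) - c·g(x) = (x^[τ])ᵀ (S + T) (x^[τ])` for all `x`. -/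
theorem dnn_strict_dual_feasibility (p : ℕ) (hp : 1 ≤ p)
    (n : Fin p → ℕ) (hn : ∀ i, 1 ≤ n i) (τ : Fin p → ℕ)
    (f : MvPolynomial (Σ i : Fin p, Fin (n i)) ℝ)
    (hf : IsMultiForm f (fun i => 2 * τ i)) :
    ∃ (c : ℝ) (S T : Matrix (Lam n τ) (Lam n τ) ℝ),
      S.PosDef ∧ T.IsSymm ∧ (∀ β γ : Lam n τ, 0 < T β γ) ∧
      ∀ x : ∀ i : Fin p, Fin (n i) → ℝ,
        evalAt x f - c * evalAt x (gPoly n τ) =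
          ∑ β : Lam n τ, ∑ γ : Lam n τ, (S + T) β γ * (Lam.mono β x * Lam.mono γ x) := by
  classical
  -- Expansion of g
  choose C hC1 hCeq using fun i : Fin p => pow_sum_sq_expand (n i) (τ i) (hn i)
  set Cb : Lam n τ → ℝ := fun β => ∏ i, C i ⟨β.1 i, β.2 i⟩ with hCbdef
  have hCb1 : ∀ β, 1 ≤ Cb β := fun β => by
    simp only [hCbdef]
    have := Finset.prod_le_prod (s := (Finset.univ : Finset (Fin p)))
      (f := fun _ : Fin p => (1:ℝ))
      (g := fun i => C i ⟨β.1 i, β.2 i⟩) (fun i _ => zero_le_one) (fun i _ => hC1 i _)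
    simpa using this
  have hgx : ∀ x, evalAt x (gPoly n τ) = ∑ β : Lam n τ, Cb β * (Lam.mono β x) ^ 2 := by
    intro x
    have h1 : evalAt x (gPoly n τ) = ∏ i, (∑ j, x i j ^ 2) ^ τ i := by
      simp [evalAt, gPoly]
    rw [h1, Finset.prod_congr rfl fun i _ => hCeq i (x i),
      Finset.prod_univ_sum (fun i => (Finset.univ : Finset (Vec (n i) (τ i))))
        (fun i a => C i a * ∏ j, x i j ^ (2 * a.1 j))]
    rw [Fintype.piFinset_univ]
    set e : (∀ i, Vec (n i) (τ i)) ≃ Lam n τ :=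
      { toFun := fun P => ⟨fun i => (P i).1, fun i => (P i).2⟩
        invFun := fun β i => ⟨β.1 i, β.2 i⟩
        left_inv := fun P => funext fun i => Subtype.ext rfl
        right_inv := fun β => Subtype.ext rfl } with he
    refine Fintype.sum_equiv e _ _ fun P => ?_
    have hA1 : (∏ i, C i (P i)) = Cb (e P) := by
      simp only [hCbdef]
      exact Finset.prod_congr rfl fun i _ => congrArg (C i) (Subtype.ext rfl)
    have hA2 : (∏ i, ∏ j, x i j ^ (2 * (P i).1 j)) = (Lam.mono (e P) x) ^ 2 := by
      have hmono : Lam.mono (e P) x = ∏ i, ∏ j, x i j ^ (P i).1 j := rfl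
      rw [hmono, ← Finset.prod_pow]
      refine Finset.prod_congr rfl fun i _ => ?_
      rw [← Finset.prod_pow]
      refine Finset.prod_congr rfl fun j _ => ?_
      rw [← pow_mul]
      exact congrArg (x i j ^ ·) (by ring)
    calc ∏ i, (C i (P i) * ∏ j, x i j ^ (2 * (P i).1 j))
        = (∏ i, C i (P i)) * ∏ i, ∏ j, x i j ^ (2 * (P i).1 j) := Finset.prod_mul_distrib
      _ = Cb (e P) * (Lam.mono (e P) x) ^ 2 := by rw [hA1, hA2]
  -- splitting of f's exponents
  have hsplit : ∀ m : (Σ i : Fin p, Fin (n i)) →₀ ℕ, m ∈ f.support →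
      ∃ bg : Lam n τ × Lam n τ, ∀ i j, bg.1.1 i j + bg.2.1 i j = m ⟨i, j⟩ := by
    intro m hm
    choose b hb1 hb2 using fun i : Fin p =>
      exists_le_sum' (fun j => m ⟨i, j⟩) (τ i)
        (by show τ i ≤ ∑ j, m ⟨i, j⟩
            have h : ∑ j, m ⟨i, j⟩ = 2 * τ i := hf m hm i; omega)
    have hc : ∀ i, ∑ j, (m ⟨i, j⟩ - b i j) = τ i := by
      intro i
      have h3 : ∑ j, ((m ⟨i, j⟩ - b i j) + b i j) = 2 * τ i := by
        rw [Finset.sum_congr rfl fun j _ => Nat.sub_add_cancel (hb1 i j)]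
        have h : ∑ j, m ⟨i, j⟩ = 2 * τ i := hf m hm i
        exact h
      rw [Finset.sum_add_distrib, hb2 i] at h3
      omega
    exact ⟨(⟨b, hb2⟩, ⟨fun i j => m ⟨i, j⟩ - b i j, hc⟩), fun i j =>
      Nat.add_sub_cancel' (hb1 i j)⟩
  -- default element of Lam
  have e0 : Lam n τ := ⟨fun i j => if j = ⟨0, hn i⟩ then τ i else 0, fun i => by
    rw [Finset.sum_ite_eq' Finset.univ (⟨0, hn i⟩ : Fin (n i)) (fun _ => τ i)]
    simp⟩
  set sp : ((Σ i : Fin p, Fin (n i)) →₀ ℕ) → Lam n τ × Lam n τ := fun m =>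
    if h : m ∈ f.support then (hsplit m h).choose else (e0, e0) with hspdef
  have hsp : ∀ m ∈ f.support, ∀ i j, (sp m).1.1 i j + (sp m).2.1 i j = m ⟨i, j⟩ := by
    intro m hm i j
    rw [hspdef]
    simp only [hm, dif_pos]
    exact (hsplit m hm).choose_spec i j
  set A : Matrix (Lam n τ) (Lam n τ) ℝ := Matrix.of fun β γ =>
    ∑ m ∈ f.support.filter (fun m => sp m = (β, γ)), f.coeff m with hAdef
  have hmonomul : ∀ (β γ : Lam n τ) (x : ∀ i : Fin p, Fin (n i) → ℝ),
      Lam.mono β x * Lam.mono γ x = ∏ i, ∏ j, x i j ^ (β.1 i j + γ.1 i j) := by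
    intro β γ x
    rw [Lam.mono, Lam.mono, ← Finset.prod_mul_distrib]
    refine Finset.prod_congr rfl fun i _ => ?_
    rw [← Finset.prod_mul_distrib]
    exact Finset.prod_congr rfl fun j _ => (pow_add _ _ _).symm
  have hquadA : ∀ x, (∑ β : Lam n τ, ∑ γ : Lam n τ, A β γ * (Lam.mono β x * Lam.mono γ x))
      = evalAt x f := by
    intro x
    have h0 : ∑ β : Lam n τ, ∑ γ : Lam n τ, A β γ * (Lam.mono β x * Lam.mono γ x)
        = ∑ bg : Lam n τ × Lam n τ, A bg.1 bg.2 * (Lam.mono bg.1 x * Lam.mono bg.2 x) :=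
      (Fintype.sum_prod_type (f := fun bg : Lam n τ × Lam n τ =>
        A bg.1 bg.2 * (Lam.mono bg.1 x * Lam.mono bg.2 x))).symm
    rw [h0, evalAt, eval_eq', ← Finset.sum_fiberwise f.support sp
      (fun m => f.coeff m * ∏ q : Σ i : Fin p, Fin (n i), x q.1 q.2 ^ m q)]
    refine Finset.sum_congr rfl fun bg _ => ?_
    show (∑ m ∈ f.support.filter (fun m => sp m = bg), f.coeff m)
        * (Lam.mono bg.1 x * Lam.mono bg.2 x) = _
    rw [Finset.sum_mul]
    refine Finset.sum_congr rfl fun m hm => ?_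
    obtain ⟨hms, hmsp⟩ := Finset.mem_filter.mp hm
    congr 1
    rw [hmonomul]
    rw [← Finset.univ_sigma_univ, Finset.prod_sigma]
    refine Finset.prod_congr rfl fun i _ => Finset.prod_congr rfl fun j _ => ?_
    rw [← hsp m hms i j, hmsp]
  -- symmetrized matrix
  set B : Matrix (Lam n τ) (Lam n τ) ℝ := Matrix.of fun β γ => (A β γ + A γ β) / 2 with hBdef
  have hBsymm : ∀ β γ, B β γ = B γ β := fun β γ => by
    show (A β γ + A γ β) / 2 = (A γ β + A β γ) / 2; ring
  have hquadB : ∀ x, (∑ β : Lam n τ, ∑ γ : Lam n τ, B β γ * (Lam.mono β x * Lam.mono γ x))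
      = evalAt x f := by
    intro x
    have hAT : (∑ β : Lam n τ, ∑ γ : Lam n τ, A γ β * (Lam.mono β x * Lam.mono γ x))
        = ∑ β : Lam n τ, ∑ γ : Lam n τ, A β γ * (Lam.mono β x * Lam.mono γ x) := by
      rw [Finset.sum_comm]
      refine Finset.sum_congr rfl fun β _ => Finset.sum_congr rfl fun γ _ => by ring
    calc ∑ β : Lam n τ, ∑ γ : Lam n τ, B β γ * (Lam.mono β x * Lam.mono γ x)
        = ∑ β : Lam n τ, ∑ γ : Lam n τ,
            (A β γ * (Lam.mono β x * Lam.mono γ x) / 2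
              + A γ β * (Lam.mono β x * Lam.mono γ x) / 2) := by
          refine Finset.sum_congr rfl fun β _ => Finset.sum_congr rfl fun γ _ => ?_
          show (A β γ + A γ β) / 2 * (Lam.mono β x * Lam.mono γ x) = _
          ring
      _ = (∑ β : Lam n τ, ∑ γ : Lam n τ, A β γ * (Lam.mono β x * Lam.mono γ x)) / 2
          + (∑ β : Lam n τ, ∑ γ : Lam n τ, A γ β * (Lam.mono β x * Lam.mono γ x)) / 2 := by
          simp only [Finset.sum_add_distrib, Finset.sum_div]
      _ = evalAt x f := by rw [hAT, hquadA]; ring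
  -- assemble
  set J : Matrix (Lam n τ) (Lam n τ) ℝ := Matrix.of fun _ _ => (1 : ℝ) with hJdef
  set W : Matrix (Lam n τ) (Lam n τ) ℝ := B - J with hWdef
  set M : ℝ := (∑ β : Lam n τ, ∑ γ : Lam n τ, |W β γ|) + 1 with hMdef
  have hWabs : 0 ≤ ∑ β : Lam n τ, ∑ γ : Lam n τ, |W β γ| :=
    Finset.sum_nonneg fun β _ => Finset.sum_nonneg fun γ _ => abs_nonneg _
  have hM1 : 1 ≤ M := by rw [hMdef]; linarith
  set D : Matrix (Lam n τ) (Lam n τ) ℝ := Matrix.diagonal Cb with hDdef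
  refine ⟨-M, W + M • D, J, Matrix.posDef_iff_dotProduct_mulVec.mpr ⟨?_, ?_⟩, ?_, fun β γ => one_pos, fun x => ?_⟩
  · -- IsHermitian
    ext β γ
    simp only [Matrix.conjTranspose_apply, Matrix.add_apply, Matrix.smul_apply, star_trivial,
      hWdef, Matrix.sub_apply, hDdef, Matrix.diagonal_apply, hJdef, Matrix.of_apply,
      smul_eq_mul]
    rw [hBsymm γ β]
    by_cases h : β = γ
    · subst h; simp
    · simp [h, Ne.symm h]
  · -- positivity
    intro v hv
    have hvs : 0 < ∑ δ : Lam n τ, v δ ^ 2 := by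
      obtain ⟨δ0, hδ0⟩ := Function.ne_iff.mp hv
      have hδ0' : v δ0 ≠ 0 := by simpa using hδ0
      have : 0 < v δ0 ^ 2 :=
        lt_of_le_of_ne (sq_nonneg _) (Ne.symm (pow_ne_zero 2 hδ0'))
      exact lt_of_lt_of_le this (Finset.single_le_sum
        (f := fun δ => v δ ^ 2) (fun δ _ => sq_nonneg _) (Finset.mem_univ δ0))
    set s : ℝ := ∑ δ : Lam n τ, v δ ^ 2 with hsdef
    have hexp : dotProduct (star v) ((W + M • D) *ᵥ v)
        = (∑ β : Lam n τ, ∑ γ : Lam n τ, v β * W β γ * v γ)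
          + M * ∑ β : Lam n τ, Cb β * v β ^ 2 := by
      rw [star_trivial]
      simp only [dotProduct, Matrix.mulVec, Matrix.add_apply, Matrix.smul_apply,
        smul_eq_mul, dotProduct, Finset.mul_sum]
      rw [← Finset.sum_add_distrib]
      refine Finset.sum_congr rfl fun β _ => ?_
      calc ∑ γ : Lam n τ, v β * ((W β γ + M * D β γ) * v γ)
          = ∑ γ : Lam n τ, (v β * W β γ * v γ
              + M * (if β = γ then Cb β * (v β * v γ) else 0)) := by
            refine Finset.sum_congr rfl fun γ _ => ?_
            by_cases h : β = γ
            · subst h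
              simp only [hDdef, Matrix.diagonal_apply_eq, if_true]
              ring
            · simp only [hDdef, Matrix.diagonal_apply_ne _ h, h, if_false]
              ring
        _ = (∑ γ : Lam n τ, v β * W β γ * v γ) + M * (Cb β * (v β * v β)) := by
            rw [Finset.sum_add_distrib, ← Finset.mul_sum, Finset.sum_ite_eq]
            simp only [Finset.mem_univ, if_true]
        _ = (∑ γ : Lam n τ, v β * W β γ * v γ) + M * (Cb β * v β ^ 2) := by ring
    rw [hexp]
    have hW1 : ∀ β γ, -(|W β γ| * s) ≤ v β * W β γ * v γ := by
      intro β γ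
      have hvb : v β ^ 2 ≤ s := Finset.single_le_sum
        (f := fun δ => v δ ^ 2) (fun δ _ => sq_nonneg _) (Finset.mem_univ β)
      have hvc : v γ ^ 2 ≤ s := Finset.single_le_sum
        (f := fun δ => v δ ^ 2) (fun δ _ => sq_nonneg _) (Finset.mem_univ γ)
      have h2 : |v β| * |v γ| ≤ s := abs_mul_abs_le_sum_sq _ _ _ hvb hvc
      have h1 : |v β * W β γ * v γ| ≤ |W β γ| * s := by
        rw [abs_mul, abs_mul]
        calc |v β| * |W β γ| * |v γ| = |W β γ| * (|v β| * |v γ|) := by ring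
          _ ≤ |W β γ| * s := mul_le_mul_of_nonneg_left h2 (abs_nonneg _)
      linarith [neg_abs_le (v β * W β γ * v γ)]
    have h0 : ∑ β : Lam n τ, ∑ γ : Lam n τ, -(|W β γ| * s)
        ≤ ∑ β : Lam n τ, ∑ γ : Lam n τ, v β * W β γ * v γ :=
      Finset.sum_le_sum fun β _ => Finset.sum_le_sum fun γ _ => hW1 β γ
    have h1 : ∑ β : Lam n τ, ∑ γ : Lam n τ, -(|W β γ| * s)
        = -((∑ β : Lam n τ, ∑ γ : Lam n τ, |W β γ|) * s) := by
      rw [Finset.sum_mul, ← Finset.sum_neg_distrib]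
      refine Finset.sum_congr rfl fun β _ => ?_
      rw [Finset.sum_mul, ← Finset.sum_neg_distrib]
    have hMs : (∑ β : Lam n τ, ∑ γ : Lam n τ, |W β γ|) * s = M * s - s := by
      rw [hMdef]; ring
    have hsum2 : M * s ≤ M * ∑ β : Lam n τ, Cb β * v β ^ 2 := by
      refine mul_le_mul_of_nonneg_left ?_ (by linarith : (0:ℝ) ≤ M)
      rw [hsdef]
      exact Finset.sum_le_sum fun β _ => le_mul_of_one_le_left (sq_nonneg _) (hCb1 β)
    rw [h1, hMs] at h0
    linarith
  · -- J symmetric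
    ext β γ; rfl
  · -- identity
    have hST : ∀ β γ, ((W + M • D) + J) β γ = B β γ + M * D β γ := by
      intro β γ
      show (B β γ - J β γ + M * D β γ) + J β γ = B β γ + M * D β γ
      ring
    calc evalAt x f - (-M) * evalAt x (gPoly n τ)
        = evalAt x f + M * evalAt x (gPoly n τ) := by ring
      _ = (∑ β : Lam n τ, ∑ γ : Lam n τ, B β γ * (Lam.mono β x * Lam.mono γ x))
          + M * ∑ β : Lam n τ, ∑ γ : Lam n τ,
              Matrix.diagonal Cb β γ * (Lam.mono β x * Lam.mono γ x) := by
          rw [hquadB, quad_diag Cb (fun β => Lam.mono β x), hgx]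
      _ = ∑ β : Lam n τ, ∑ γ : Lam n τ,
            (B β γ * (Lam.mono β x * Lam.mono γ x)
              + M * (Matrix.diagonal Cb β γ * (Lam.mono β x * Lam.mono γ x))) := by
          rw [Finset.mul_sum, ← Finset.sum_add_distrib]
          refine Finset.sum_congr rfl fun β _ => ?_
          rw [Finset.mul_sum, ← Finset.sum_add_distrib]
      _ = ∑ β : Lam n τ, ∑ γ : Lam n τ, ((W + M • D) + J) β γ
            * (Lam.mono β x * Lam.mono γ x) := by
          refine Finset.sum_congr rfl fun β _ => Finset.sum_congr rfl fun γ _ => ?_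
          rw [hST, hDdef]
          ring
end
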